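/- Fix r ≥ 1. Define endomorphisms U and D of the free ℤ[q]-module on partitions by U(λ) = Σ_{μ: λ ≺_r μ} q^{hgt(μ/λ)} μ and D(λ) = Σ_{μ: μ ≺_r λ} q^{hgt(λ/μ)} μ. Then D∘U − U∘D = ((1−q^{2r})/(1−q²))·Id, i.e., D∘U = U∘D + (1 + q² + q⁴ + … + q^{2(r−1)})·Id. -/

import Mathlib

open scoped Classical

/-- A doubly infinite bit sequence: a function `ℤ → ℕ` with all values `≤ 1`. -/
def IsBitSeq (s : ℤ → ℕ) : Prop := ∀ i, s i ≤ 1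

/-- The quadruple `(w (i-r), t (i-r), s i, w i)` equals `(1,0,0,1)`:
the strip `t/s` with witness `w` has an `r`-ribbon at position `i`. -/
def Quad (r : ℕ) (s t w : ℤ → ℕ) (i : ℤ) : Prop :=
  w (i - r) = 1 ∧ t (i - r) = 0 ∧ s i = 0 ∧ w i = 1

/-- `w` is a witness for `t/s` being a horizontal `r`-ribbon strip: for every `i`, the
quadruple `(w (i-r), t (i-r), s i, w i)` is of the form `(a,a,b,b)` or equals `(1,0,0,1)`,
the latter happening only finitely often. -/
def IsWitness (r : ℕ) (s t w : ℤ → ℕ) : Prop :=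
  (∀ i : ℤ, (w (i - r) = t (i - r) ∧ s i = w i) ∨ Quad r s t w i) ∧
    {i : ℤ | Quad r s t w i}.Finite

/-- `t/s` is a horizontal `r`-ribbon strip (`s ≤ʰᵣ t`). -/
def HStrip (r : ℕ) (s t : ℤ → ℕ) : Prop := ∃ w, IsWitness r s t w

/-- The height `∑_{j=1}^{r-1} w (i - j)` of a ribbon at position `i` read off from `w`. -/
def hgtAt (r : ℕ) (w : ℤ → ℕ) (i : ℤ) : ℕ := ∑ j ∈ Finset.Ico 1 r, w (i - (j : ℤ))

/-- A partition: a weakly decreasing, eventually zero function `ℕ → ℕ`. -/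
def IsPartition (f : ℕ → ℕ) : Prop :=
  (∀ i j : ℕ, i ≤ j → f j ≤ f i) ∧ ∃ N : ℕ, ∀ n : ℕ, N ≤ n → f n = 0

/-- The edge sequence of a partition: bit `1` exactly at the positions `f j - j - 1`
(for `j : ℕ`); it is eventually `1` to the left and `0` to the right, and adding a
square on diagonal `k` replaces the substring `10` at positions `(k-1, k)` by `01`. -/
noncomputable def edgeSeq (f : ℕ → ℕ) (k : ℤ) : ℕ :=
  if ∃ j : ℕ, (f j : ℤ) - (j : ℤ) - 1 = k then 1 else 0

/-- `t` is obtained from `s` by adding one `r`-ribbon with head on diagonal `p`: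
the two sequences differ exactly at positions `p - r` and `p`, where the bits
`(1,0)` of `s` become `(0,1)` in `t`. -/
def EdgeFlip (r : ℕ) (s t : ℤ → ℕ) (p : ℤ) : Prop :=
  s (p - r) = 1 ∧ s p = 0 ∧ t (p - r) = 0 ∧ t p = 1 ∧
    ∀ j : ℤ, j ≠ p - r → j ≠ p → s j = t j

/-- The type of partitions. -/
abbrev PartT : Type := {f : ℕ → ℕ // IsPartition f}

/-- The free `ℤ[q]`-module on the set of partitions. -/
abbrev FreeMod : Type := PartT →₀ Polynomial ℤ

/-- `λ ≺ᵣ μ`: `μ` is obtained from `λ` by adding one `r`-ribbon. -/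
def CovRib (r : ℕ) (lam mu : PartT) : Prop :=
  ∃ k : ℤ, EdgeFlip r (edgeSeq lam.1) (edgeSeq mu.1) k

namespace Stmt8Aux

noncomputable def gseq (f : ℕ → ℕ) (j : ℕ) : ℤ := (f j : ℤ) - j - 1

lemma edge_le_one (f : ℕ → ℕ) (k : ℤ) : edgeSeq f k ≤ 1 := by
  unfold edgeSeq; split <;> simp

lemma edge_eq_one_iff (f : ℕ → ℕ) (k : ℤ) : edgeSeq f k = 1 ↔ ∃ j, gseq f j = k := by
  unfold edgeSeq gseq; split <;> simp_all

lemma edge_eq_zero_iff (f : ℕ → ℕ) (k : ℤ) : edgeSeq f k = 0 ↔ ¬ ∃ j, gseq f j = k := by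
  unfold edgeSeq gseq; split <;> simp_all

lemma gseq_strictAnti {f : ℕ → ℕ} (hf : IsPartition f) : StrictAnti (gseq f) := by
  intro i j hij
  have := hf.1 i j hij.le
  unfold gseq
  omega

lemma strictAnti_ext {e₁ e₂ : ℕ → ℤ} (h₁ : StrictAnti e₁) (h₂ : StrictAnti e₂)
    (h : ∀ k, (∃ j, e₁ j = k) ↔ (∃ j, e₂ j = k)) : e₁ = e₂ := by
  have key : ∀ (a b : ℕ → ℤ), StrictAnti a → StrictAnti b →
      (∀ k, (∃ j, a j = k) → ∃ j, b j = k) → ∀ j, (∀ i, i < j → a i = b i) → a j ≤ b j := by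
    intro a b ha hb hab j ih
    obtain ⟨m, hm⟩ := hab (a j) ⟨j, rfl⟩
    rcases lt_or_ge m j with hlt | hge
    · have : a m = a j := by rw [ih m hlt, hm]
      exact absurd (ha.injective this) (by omega)
    · calc a j = b m := hm.symm
        _ ≤ b j := hb.antitone hge
  funext j
  induction j using Nat.strong_induction_on with
  | _ j ih =>
    exact le_antisymm (key e₁ e₂ h₁ h₂ (fun k hk => (h k).1 hk) j ih)
      (key e₂ e₁ h₂ h₁ (fun k hk => (h k).2 hk) j (fun i hi => (ih i hi).symm))

lemma edgeSeq_inj {f f' : ℕ → ℕ} (hf : IsPartition f) (hf' : IsPartition f')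
    (h : edgeSeq f = edgeSeq f') : f = f' := by
  have hg : gseq f = gseq f' := by
    refine strictAnti_ext (gseq_strictAnti hf) (gseq_strictAnti hf') fun k => ?_
    rw [← edge_eq_one_iff, ← edge_eq_one_iff, h]
  funext j
  have := congrFun hg j
  unfold gseq at this
  omega

/-- A sequence is "good at level N". -/
def Good (t : ℤ → ℕ) (N : ℕ) : Prop :=
  (∀ k, t k ≤ 1) ∧ (∀ k : ℤ, k < -(N : ℤ) → t k = 1) ∧ (∀ k : ℤ, (N : ℤ) ≤ k → t k = 0) ∧
    (∑ k ∈ Finset.Ico (-(N : ℤ)) (N : ℤ), t k) = N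

lemma Good.succ {t : ℤ → ℕ} {N : ℕ} (h : Good t N) : Good t (N + 1) := by
  obtain ⟨hb, hl, hr, hs⟩ := h
  refine ⟨hb, fun k hk => hl k (by push_cast at hk ⊢; omega),
    fun k hk => hr k (by push_cast at hk ⊢; omega), ?_⟩
  have hset : Finset.Ico (-((N:ℕ)+1 : ℤ)) (((N:ℕ)+1 : ℤ)) =
      insert (-(N:ℤ)-1) (insert (N:ℤ) (Finset.Ico (-(N:ℤ)) (N:ℤ))) := by
    ext x; simp [Finset.mem_Ico, Finset.mem_insert]; omega
  push_cast
  rw [hset, Finset.sum_insert (by simp [Finset.mem_Ico, Finset.mem_insert]; try omega),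
    Finset.sum_insert (by simp [Finset.mem_Ico]; try omega), hs,
    hl _ (by omega), hr _ (by omega)]
  omega

lemma Good.mono {t : ℤ → ℕ} {N M : ℕ} (h : Good t N) (hNM : N ≤ M) : Good t M := by
  induction M, hNM using Nat.le_induction with
  | base => exact h
  | succ M _ ih => exact ih.succ

lemma sum_eq_card_filter (I : Finset ℤ) (t : ℤ → ℕ) (hb : ∀ k, t k ≤ 1) :
    (∑ k ∈ I, t k) = (I.filter (fun k => t k = 1)).card := by
  rw [Finset.card_filter]
  refine Finset.sum_congr rfl fun k _ => ?_
  have := hb k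
  split <;> omega

lemma good_edgeSeq {f : ℕ → ℕ} (hf : IsPartition f) : ∃ N, Good (edgeSeq f) N := by
  obtain ⟨hmono, M, hM⟩ := hf
  refine ⟨M + f 0, ?_, ?_, ?_, ?_⟩
  · exact edge_le_one f
  · intro k hk
    rw [edge_eq_one_iff]
    refine ⟨(-k-1).toNat, ?_⟩
    have h1 : ((-k-1).toNat : ℤ) = -k-1 := by push_cast at hk ⊢; omega
    have h2 : M ≤ (-k-1).toNat := by push_cast at hk ⊢; omega
    unfold gseq
    rw [hM _ h2]
    omega
  · intro k hk
    rw [edge_eq_zero_iff]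
    rintro ⟨j, hj⟩
    unfold gseq at hj
    have hj0 : f j ≤ f 0 := hmono 0 j (by omega)
    by_cases hjM : M ≤ j
    · rw [hM _ hjM] at hj; push_cast at hk hj ⊢; omega
    · push_cast at hk hj ⊢; omega
  · set N := M + f 0 with hN
    rw [sum_eq_card_filter _ _ (edge_le_one f)]
    have himg : (Finset.Ico (-(N:ℤ)) (N:ℤ)).filter (fun k => edgeSeq f k = 1) =
        (Finset.range N).image (gseq f) := by
      ext k
      simp only [Finset.mem_filter, Finset.mem_Ico, Finset.mem_image, Finset.mem_range]
      constructor
      · rintro ⟨⟨hk1, hk2⟩, hk⟩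
        obtain ⟨j, hj⟩ := (edge_eq_one_iff f k).1 hk
        refine ⟨j, ?_, hj⟩
        by_contra hjN
        have hjM : M ≤ j := by omega
        unfold gseq at hj
        rw [hM _ hjM] at hj
        omega
      · rintro ⟨j, hjN, hj⟩
        have hj0 : f j ≤ f 0 := hmono 0 j (by omega)
        refine ⟨⟨?_, ?_⟩, (edge_eq_one_iff f k).2 ⟨j, hj⟩⟩ <;>
          · unfold gseq at hj; omega
    rw [himg, Finset.card_image_of_injective _ (gseq_strictAnti ⟨hmono, M, hM⟩).injective,
      Finset.card_range]



lemma exists_partition_of_good {t : ℤ → ℕ} {N : ℕ} (h : Good t N) :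
    ∃ f : ℕ → ℕ, IsPartition f ∧ edgeSeq f = t := by
  obtain ⟨hb, hl, hrt, hs⟩ := h
  set F : Finset ℤ := (Finset.Ico (-(N : ℤ)) (N : ℤ)).filter (fun k => t k = 1) with hF
  have hFcard : F.card = N := by
    rw [← sum_eq_card_filter _ _ hb, hs]
  have hFmem : ∀ k ∈ F, -(N:ℤ) ≤ k ∧ k < N ∧ t k = 1 := by
    intro k hk
    simp only [hF, Finset.mem_filter, Finset.mem_Ico] at hk
    tauto
  set emb := F.orderEmbOfFin hFcard with hemb
  set e : ℕ → ℤ := fun n => if h : n < N then emb ⟨n, h⟩ else -(N:ℤ) with he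
  have heF : ∀ n, n < N → e n ∈ F := by
    intro n hn
    simp only [he, dif_pos hn]
    exact F.orderEmbOfFin_mem hFcard _
  have hemono : ∀ m n, m < n → n < N → e m < e n := by
    intro m n hmn hn
    simp only [he, dif_pos hn, dif_pos (lt_trans hmn hn)]
    exact (Finset.orderEmbOfFin F hFcard).strictMono (by simp [Fin.lt_def]; omega)
  have helow : ∀ n, n < N → -(N:ℤ) + n ≤ e n := by
    intro n
    induction n with
    | zero => intro hn; have := (hFmem _ (heF 0 hn)).1; push_cast; omega
    | succ m ih =>
      intro hn
      have h1 := ih (by omega)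
      have h2 := hemono m (m+1) (by omega) hn
      push_cast at h1 ⊢; omega
  have herange : ∀ k ∈ F, ∃ n, n < N ∧ e n = k := by
    intro k hk
    have : k ∈ Set.range emb := by
      rw [hemb, Finset.range_orderEmbOfFin]
      exact_mod_cast hk
    obtain ⟨i, hi⟩ := this
    refine ⟨i.val, i.isLt, ?_⟩
    simp only [he, dif_pos i.isLt]
    rw [Fin.eta, hi]
  set G : ℕ → ℤ := fun j => if j < N then e (N-1-j) else -(j:ℤ)-1 with hG
  have hGlow : ∀ j : ℕ, -(j:ℤ)-1 ≤ G j := by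
    intro j
    simp only [hG]
    split
    · next hj =>
      have h1 := helow (N-1-j) (by omega)
      have hc : ((N-1-j : ℕ) : ℤ) = (N:ℤ)-1-j := by omega
      omega
    · omega
  have hGanti : ∀ j : ℕ, G (j+1) < G j := by
    intro j
    simp only [hG]
    by_cases h1 : j + 1 < N
    · rw [if_pos h1, if_pos (by omega)]
      exact hemono _ _ (by omega) (by omega)
    · by_cases h2 : j < N
      · rw [if_neg h1, if_pos h2]
        have := (hFmem _ (heF (N-1-j) (by omega))).1
        push_cast; omega
      · rw [if_neg h1, if_neg h2]
        push_cast; omega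
  have hGbig : ∀ j : ℕ, N ≤ j → G j = -(j:ℤ)-1 := by
    intro j hj; simp only [hG]; rw [if_neg (by omega)]
  have hGone : ∀ k, t k = 1 ↔ ∃ j : ℕ, G j = k := by
    intro k
    constructor
    · intro hk
      rcases lt_or_ge k (-(N:ℤ)) with hkN | hkN
      · refine ⟨(-k-1).toNat, ?_⟩
        have h1 : N ≤ (-k-1).toNat := by omega
        rw [hGbig _ h1]; omega
      · have hkN2 : k < (N:ℤ) := by
          by_contra hc
          have := hrt k (by omega)
          omega
        have hkF : k ∈ F := by
          simp only [hF, Finset.mem_filter, Finset.mem_Ico]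
          exact ⟨⟨hkN, hkN2⟩, hk⟩
        obtain ⟨n, hn, hne⟩ := herange k hkF
        refine ⟨N-1-n, ?_⟩
        simp only [hG]
        rw [if_pos (by omega)]
        have : N-1-(N-1-n) = n := by omega
        rw [this, hne]
    · rintro ⟨j, hj⟩
      simp only [hG] at hj
      split at hj
      · next hjN => exact (hFmem _ (hj ▸ heF _ (by omega))).2.2
      · exact hl k (by omega)
  refine ⟨fun j => (G j + j + 1).toNat, ⟨?_, ⟨N, ?_⟩⟩, ?_⟩
  · intro i j hij
    refine antitone_nat_of_succ_le (f := fun j => (G j + (j:ℤ) + 1).toNat) (fun n => ?_) hij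
    have h1 := hGanti n
    show (G (n+1) + ((n+1 : ℕ) : ℤ) + 1).toNat ≤ (G n + (n:ℤ) + 1).toNat
    push_cast
    omega
  · intro n hn
    show (G n + n + 1).toNat = 0
    rw [hGbig _ hn]
    omega
  · funext k
    have hcast : ∀ j : ℕ, ((G j + j + 1).toNat : ℤ) = G j + j + 1 := by
      intro j; have := hGlow j; omega
    have hiff : (∃ j : ℕ, (((G j + j + 1).toNat : ℤ)) - (j:ℤ) - 1 = k) ↔ t k = 1 := by
      rw [hGone]
      constructor
      · rintro ⟨j, hj⟩; exact ⟨j, by rw [hcast j] at hj; omega⟩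
      · rintro ⟨j, hj⟩; exact ⟨j, by rw [hcast j]; omega⟩
    unfold edgeSeq
    split
    · next hyes => exact (hiff.1 hyes).symm
    · next hno =>
      have h0 := hb k
      by_contra hc
      have h1 : t k = 1 := by omega
      exact hno (hiff.2 h1)

def flipFn (s : ℤ → ℕ) (a b : ℤ) : ℤ → ℕ := fun k => if k = a then 0 else if k = b then 1 else s k

lemma flipFn_a (s : ℤ → ℕ) (a b : ℤ) : flipFn s a b a = 0 := by simp [flipFn]

lemma flipFn_b (s : ℤ → ℕ) {a b : ℤ} (h : b ≠ a) : flipFn s a b b = 1 := by simp [flipFn, h]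

lemma flipFn_other (s : ℤ → ℕ) {a b j : ℤ} (h1 : j ≠ a) (h2 : j ≠ b) :
    flipFn s a b j = s j := by simp [flipFn, h1, h2]

lemma good_flip {s : ℤ → ℕ} {N : ℕ} {a b : ℤ} (h : Good s N) (ha : s a = 1) (hb : s b = 0)
    (hab : a ≠ b) : ∃ M, Good (flipFn s a b) M := by
  refine ⟨N + a.natAbs + b.natAbs + 1, ?_⟩
  set M := N + a.natAbs + b.natAbs + 1 with hMdef
  have hMdef' : M = N + a.natAbs + b.natAbs + 1 := rfl
  obtain ⟨hbits, hl, hrt, hs⟩ := h.mono (show N ≤ M by omega)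
  refine ⟨?_, ?_, ?_, ?_⟩
  · intro k
    unfold flipFn
    split
    · omega
    split
    · omega
    · exact hbits k
  · intro k hk
    rw [flipFn_other s (by omega) (by omega)]
    exact hl k hk
  · intro k hk
    rw [flipFn_other s (by omega) (by omega)]
    exact hrt k hk
  · have haI : a ∈ Finset.Ico (-(M:ℤ)) (M:ℤ) := by
      simp only [Finset.mem_Ico]; omega
    have hbI : b ∈ (Finset.Ico (-(M:ℤ)) (M:ℤ)).erase a := by
      simp only [Finset.mem_erase, Finset.mem_Ico]
      exact ⟨Ne.symm hab, by omega⟩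
    have he1 : ∀ g : ℤ → ℕ, (∑ k ∈ Finset.Ico (-(M:ℤ)) (M:ℤ), g k) =
        g a + (g b + ∑ k ∈ ((Finset.Ico (-(M:ℤ)) (M:ℤ)).erase a).erase b, g k) := by
      intro g
      rw [Finset.add_sum_erase _ g hbI, Finset.add_sum_erase _ g haI]
    have hsame : (∑ k ∈ ((Finset.Ico (-(M:ℤ)) (M:ℤ)).erase a).erase b, flipFn s a b k) =
        ∑ k ∈ ((Finset.Ico (-(M:ℤ)) (M:ℤ)).erase a).erase b, s k := by
      refine Finset.sum_congr rfl fun k hk => ?_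
      simp only [Finset.mem_erase] at hk
      exact flipFn_other s hk.2.1 hk.1
    rw [he1 (flipFn s a b), hsame, flipFn_a, flipFn_b _ (Ne.symm hab)]
    have h2 := he1 s
    rw [ha, hb] at h2
    rw [h2] at hs
    omega

lemma hgt_Ioo (r : ℕ) (w : ℤ → ℕ) (k : ℤ) :
    hgtAt r w k = ∑ m ∈ Finset.Ioo (k - (r:ℤ)) k, w m := by
  unfold hgtAt
  refine Finset.sum_nbij' (fun j => k - (j:ℤ)) (fun m => (k - m).toNat) ?_ ?_ ?_ ?_ ?_
  · intro j hj
    simp only [Finset.mem_Ico] at hj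
    simp only [Finset.mem_Ioo]
    omega
  · intro m hm
    simp only [Finset.mem_Ioo] at hm
    simp only [Finset.mem_Ico]
    omega
  · intro j hj
    simp only [Finset.mem_Ico] at hj
    show ((k - (k - (j:ℤ))).toNat) = j
    omega
  · intro m hm
    simp only [Finset.mem_Ioo] at hm
    show k - (((k - m).toNat : ℕ) : ℤ) = m
    omega
  · intro j _
    rfl

lemma sum_two (I : Finset ℤ) (f g : ℤ → ℕ) (a b : ℤ) (hab : a ≠ b)
    (h : ∀ m, m ≠ a → m ≠ b → f m = g m) :
    (∑ m ∈ I, (f m : ℤ)) - (∑ m ∈ I, (g m : ℤ)) =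
      (if a ∈ I then (f a : ℤ) - g a else 0) + (if b ∈ I then (f b : ℤ) - g b else 0) := by
  rw [← Finset.sum_sub_distrib]
  have h1 : (∑ m ∈ I, ((f m : ℤ) - g m)) = ∑ m ∈ I.filter (fun m => m = a ∨ m = b), ((f m :ℤ) - g m) := by
    rw [Finset.sum_filter_of_ne]
    intro x _ hx
    by_contra hc
    push_neg at hc
    rw [h x hc.1 hc.2] at hx
    simp at hx
  have h2 : I.filter (fun m => m = a ∨ m = b) = ({a, b} : Finset ℤ).filter (fun m => m ∈ I) := by
    ext x
    simp only [Finset.mem_filter, Finset.mem_insert, Finset.mem_singleton]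
    tauto
  rw [h1, h2, Finset.sum_filter, Finset.sum_pair hab]




/-- Full description of how `t` differs from `s` when `t` is obtained by adding a ribbon
at `k` and removing one at `k'` (equivalently the other way round). -/
def Desc (r : ℕ) (s t : ℤ → ℕ) (k k' : ℤ) : Prop :=
  s (k - r) = 1 ∧ s k = 0 ∧ s (k' - r) = 0 ∧ s k' = 1 ∧
  t (k - r) = 0 ∧ t k = 1 ∧ t (k' - r) = 1 ∧ t k' = 0 ∧
  k - r ≠ k' ∧ k' - r ≠ k ∧
  ∀ j : ℤ, j ≠ k - r → j ≠ k → j ≠ k' - r → j ≠ k' → s j = t j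

lemma desc_of_up {r : ℕ} {s t : ℤ → ℕ} {k k' : ℤ} (hr : 1 ≤ r) (hst : s ≠ t)
    (h1 : s (k - r) = 1) (h0 : s k = 0)
    (h : EdgeFlip r t (flipFn s (k - r) k) k') : Desc r s t k k' := by
  obtain ⟨ht1, ht0, hu0, hu1, hagree⟩ := h
  have hrZ : (1:ℤ) ≤ (r:ℤ) := by exact_mod_cast hr
  have hukr : flipFn s (k - r) k (k - r) = 0 := flipFn_a s _ _
  have huk : flipFn s (k - r) k k = 1 := flipFn_b s (by omega)
  have hne2 : k' - r ≠ k := by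
    intro hc; rw [hc, huk] at hu0; omega
  have hne3 : k' ≠ k - r := by
    intro hc; rw [hc, hukr] at hu1; omega
  have hkk' : k ≠ k' := by
    intro hc
    subst hc
    apply hst
    funext j
    by_cases hj1 : j = k - r
    · rw [hj1, h1, ht1]
    · by_cases hj2 : j = k
      · rw [hj2, h0, ht0]
      · rw [hagree j hj1 hj2, flipFn_other s hj1 hj2]
  have hskr' : s (k' - r) = 0 := by
    rw [flipFn_other s (by omega) hne2] at hu0; exact hu0
  have hsk' : s k' = 1 := by
    rw [flipFn_other s hne3 (Ne.symm hkk')] at hu1; exact hu1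
  have htkr : t (k - r) = 0 := by
    rw [hagree (k - r) (by omega) (Ne.symm hne3), hukr]
  have htk : t k = 1 := by
    rw [hagree k (Ne.symm hne2) hkk', huk]
  refine ⟨h1, h0, hskr', hsk', htkr, htk, ht1, ht0, Ne.symm hne3, hne2, ?_⟩
  intro j hj1 hj2 hj3 hj4
  rw [hagree j hj3 hj4, flipFn_other s hj1 hj2]

lemma desc_of_down {r : ℕ} {s t : ℤ → ℕ} {k' k'' : ℤ} (hr : 1 ≤ r) (hst : s ≠ t)
    (h0 : s (k' - r) = 0) (h1 : s k' = 1)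
    (h : EdgeFlip r (flipFn s k' (k' - r)) t k'') : Desc r s t k'' k' := by
  obtain ⟨hv1, hv0, ht0, ht1, hagree⟩ := h
  have hrZ : (1:ℤ) ≤ (r:ℤ) := by exact_mod_cast hr
  have hvk' : flipFn s k' (k' - r) k' = 0 := flipFn_a s _ _
  have hvk'r : flipFn s k' (k' - r) (k' - r) = 1 := flipFn_b s (by omega)
  have hne_a : k'' - r ≠ k' := by
    intro hc; rw [hc, hvk'] at hv1; omega
  have hne_b : k'' ≠ k' - r := by
    intro hc; rw [hc, hvk'r] at hv0; omega
  have hk''k' : k'' ≠ k' := by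
    intro hc
    subst hc
    apply hst
    funext j
    by_cases hj1 : j = k'' - (r:ℤ)
    · rw [hj1, h0, ht0]
    · by_cases hj2 : j = k''
      · rw [hj2, h1, ht1]
      · rw [← hagree j hj1 hj2, flipFn_other s hj2 hj1]
  have hskr'' : s (k'' - r) = 1 := by
    rw [flipFn_other s hne_a (by omega)] at hv1; exact hv1
  have hsk'' : s k'' = 0 := by
    rw [flipFn_other s hk''k' hne_b] at hv0; exact hv0
  have htk'r : t (k' - r) = 1 := by
    rw [← hagree (k' - r) (by omega) (Ne.symm hne_b), hvk'r]
  have htk' : t k' = 0 := by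
    rw [← hagree k' (Ne.symm hne_a) (Ne.symm hk''k'), hvk']
  refine ⟨hskr'', hsk'', h0, h1, ht0, ht1, htk'r, htk', hne_a, Ne.symm hne_b, ?_⟩
  intro j hj1 hj2 hj3 hj4
  rw [← hagree j hj1 hj2, flipFn_other s hj4 hj3]

lemma desc_unique {r : ℕ} {s t : ℤ → ℕ} {k₁ k₁' k₂ k₂' : ℤ} (hr : 1 ≤ r)
    (d₁ : Desc r s t k₁ k₁') (d₂ : Desc r s t k₂ k₂') : k₁ = k₂ ∧ k₁' = k₂' := by
  obtain ⟨a1, a2, a3, a4, a5, a6, a7, a8, a9, a10, a11⟩ := d₁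
  obtain ⟨b1, b2, b3, b4, b5, b6, b7, b8, b9, b10, b11⟩ := d₂
  have hrZ : (1:ℤ) ≤ (r:ℤ) := by exact_mod_cast hr
  have hA : k₂ = k₁ ∨ k₂ = k₁' - r := by
    by_cases h1 : k₂ = k₁ - r
    · rw [h1] at b2; omega
    by_cases h2 : k₂ = k₁
    · left; exact h2
    by_cases h3 : k₂ = k₁' - r
    · right; exact h3
    by_cases h4 : k₂ = k₁'
    · rw [h4] at b2; omega
    · have := a11 k₂ h1 h2 h3 h4; omega
  have hB : k₂' = k₁ - r ∨ k₂' = k₁' := by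
    by_cases h1 : k₂' = k₁ - r
    · left; exact h1
    by_cases h2 : k₂' = k₁
    · rw [h2] at b4; omega
    by_cases h3 : k₂' = k₁' - r
    · rw [h3] at b4; omega
    by_cases h4 : k₂' = k₁'
    · right; exact h4
    · have := a11 k₂' h1 h2 h3 h4; omega
  have hC : k₂ - r = k₁ - r ∨ k₂ - r = k₁' := by
    by_cases h1 : k₂ - r = k₁ - r
    · left; exact h1
    by_cases h2 : k₂ - r = k₁
    · rw [h2] at b1; omega
    by_cases h3 : k₂ - r = k₁' - r
    · rw [h3] at b1; omega
    by_cases h4 : k₂ - r = k₁'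
    · right; exact h4
    · have := a11 (k₂ - r) h1 h2 h3 h4; omega
  rcases hA with h | h <;> rcases hB with h' | h' <;> rcases hC with h'' | h'' <;> omega

lemma desc_kk' {r : ℕ} {s t : ℤ → ℕ} {k k' : ℤ} (d : Desc r s t k k') : k ≠ k' := by
  obtain ⟨_, a2, _, a4, _⟩ := d
  intro hc; rw [hc] at a2; omega

lemma desc_flipU {r : ℕ} {s t : ℤ → ℕ} {k k' : ℤ} (hr : 1 ≤ r) (d : Desc r s t k k') :
    EdgeFlip r t (flipFn s (k - r) k) k' := by
  have hkk' := desc_kk' d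
  obtain ⟨a1, a2, a3, a4, a5, a6, a7, a8, a9, a10, a11⟩ := d
  have hrZ : (1:ℤ) ≤ (r:ℤ) := by exact_mod_cast hr
  refine ⟨a7, a8, ?_, ?_, ?_⟩
  · rw [flipFn_other s (by omega) a10]; exact a3
  · rw [flipFn_other s (Ne.symm a9) (Ne.symm hkk')]; exact a4
  · intro j hj1 hj2
    by_cases hj3 : j = k - r
    · rw [hj3, a5, flipFn_a]
    · by_cases hj4 : j = k
      · rw [hj4, a6, flipFn_b s (by omega)]
      · rw [flipFn_other s hj3 hj4, ← a11 j hj3 hj4 hj1 hj2]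

lemma desc_flipD {r : ℕ} {s t : ℤ → ℕ} {k k' : ℤ} (hr : 1 ≤ r) (d : Desc r s t k k') :
    EdgeFlip r (flipFn s k' (k' - r)) t k := by
  have hkk' := desc_kk' d
  obtain ⟨a1, a2, a3, a4, a5, a6, a7, a8, a9, a10, a11⟩ := d
  have hrZ : (1:ℤ) ≤ (r:ℤ) := by exact_mod_cast hr
  refine ⟨?_, ?_, a5, a6, ?_⟩
  · rw [flipFn_other s a9 (by omega)]; exact a1
  · rw [flipFn_other s hkk' (Ne.symm a10)]; exact a2
  · intro j hj1 hj2
    by_cases hj3 : j = k'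
    · rw [hj3, a8, flipFn_a]
    · by_cases hj4 : j = k' - r
      · rw [hj4, a7, flipFn_b s (by omega)]
      · rw [flipFn_other s hj3 hj4, a11 j hj1 hj2 hj4 hj3]

lemma desc_exp {r : ℕ} {s t : ℤ → ℕ} {k k' : ℤ} (hr : 1 ≤ r) (d : Desc r s t k k') :
    hgtAt r s k + hgtAt r t k' = hgtAt r s k' + hgtAt r (flipFn s k' (k' - r)) k := by
  have hkk' := desc_kk' d
  obtain ⟨a1, a2, a3, a4, a5, a6, a7, a8, a9, a10, a11⟩ := d
  have hrZ : (1:ℤ) ≤ (r:ℤ) := by exact_mod_cast hr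
  set v := flipFn s k' (k' - r) with hv
  have hvk' : v k' = 0 := flipFn_a s _ _
  have hvk'r : v (k' - r) = 1 := flipFn_b s (by omega)
  have hvs : ∀ m, m ≠ k' - r → m ≠ k' → s m = v m := by
    intro m h1 h2; rw [hv, flipFn_other s h2 h1]
  have htv : ∀ m, m ≠ k - r → m ≠ k → t m = v m := by
    intro m h1 h2
    by_cases h3 : m = k'
    · rw [h3, a8, hvk']
    · by_cases h4 : m = k' - r
      · rw [h4, a7, hvk'r]
      · rw [← a11 m h1 h2 h4 h3, hvs m h4 h3]
  have e₁ := sum_two (Finset.Ioo (k - (r:ℤ)) k) s v (k' - r) k' (by omega) hvs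
  have e₂ := sum_two (Finset.Ioo (k' - (r:ℤ)) k') t v (k - r) k (by omega) htv
  have e₃ := sum_two (Finset.Ioo (k' - (r:ℤ)) k') s v (k' - r) k' (by omega) hvs
  have hc : ∀ (w : ℤ → ℕ) (x : ℤ),
      ((hgtAt r w x : ℕ) : ℤ) = ∑ m ∈ Finset.Ioo (x - (r:ℤ)) x, (w m : ℤ) := by
    intro w x; rw [hgt_Ioo]; push_cast; rfl
  have final : ((hgtAt r s k : ℕ) : ℤ) + hgtAt r t k' = hgtAt r s k' + hgtAt r v k := by
    have hv1' : v (k - r) = 1 := by rw [← hvs (k - r) (by omega) a9]; exact a1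
    have hv2' : v k = 0 := by rw [← hvs k (Ne.symm a10) hkk']; exact a2
    rw [hc, hc, hc, hc]
    simp only [a1, a2, a3, a4, a5, a6, a7, a8, hvk', hvk'r, hv1', hv2',
      Finset.mem_Ioo, Nat.cast_zero, Nat.cast_one] at e₁ e₂ e₃
    split_ifs at e₁ e₂ e₃ <;> omega
  exact_mod_cast final




lemma sum_telescope_Ico {M : Type*} [AddCommGroup M] (A : ℤ → M) {a b : ℤ} (hab : a ≤ b) :
    ∑ k ∈ Finset.Ico a b, (A k - A (k+1)) = A a - A b := by
  have main : ∀ n : ℕ, ∑ k ∈ Finset.Ico a (a + (n:ℤ)), (A k - A (k+1)) = A a - A (a + (n:ℤ)) := by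
    intro n
    induction n with
    | zero => simp
    | succ m ih =>
      have hins : Finset.Ico a (a + ((m+1 : ℕ):ℤ)) = insert (a + (m:ℤ)) (Finset.Ico a (a + (m:ℤ))) := by
        ext x; simp only [Finset.mem_Ico, Finset.mem_insert]; push_cast; omega
      have hstep : a + ((m+1:ℕ):ℤ) = (a + (m:ℤ)) + 1 := by push_cast; ring
      rw [hins, Finset.sum_insert (by simp), ih, hstep]
      abel
  obtain ⟨n, hn⟩ : ∃ n : ℕ, b = a + (n:ℤ) := ⟨(b-a).toNat, by omega⟩
  rw [hn]
  exact main n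

lemma tel {r N : ℕ} (hr : 1 ≤ r) {s : ℤ → ℕ} (hg : Good s N) :
    ∑ k ∈ (Finset.Ico (-(N:ℤ)) ((N:ℤ)+(r:ℤ))).filter (fun k => s (k-(r:ℤ)) = 1 ∧ s k = 0),
        (Polynomial.X : Polynomial ℤ) ^ (2 * hgtAt r s k)
    = ∑ k ∈ (Finset.Ico (-(N:ℤ)) ((N:ℤ)+(r:ℤ))).filter (fun k => s (k-(r:ℤ)) = 0 ∧ s k = 1),
        (Polynomial.X : Polynomial ℤ) ^ (2 * hgtAt r s k)
      + ∑ i ∈ Finset.range r, (Polynomial.X : Polynomial ℤ) ^ (2*i) := by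
  obtain ⟨hb, hl, hrt, -⟩ := hg
  have hrZ : (1:ℤ) ≤ (r:ℤ) := by exact_mod_cast hr
  set q : Polynomial ℤ := Polynomial.X with hq
  set A : ℤ → Polynomial ℤ := fun k => q ^ (2 * (hgtAt r s k + s (k - (r:ℤ)))) with hA
  set W := Finset.Ico (-(N:ℤ)) ((N:ℤ)+(r:ℤ)) with hW
  have key : ∀ k : ℤ, hgtAt r s k + s k = hgtAt r s (k+1) + s (k+1-(r:ℤ)) := by
    intro k
    have h1 : hgtAt r s k + s k = ∑ m ∈ Finset.Ico (k-(r:ℤ)+1) (k+1), s m := by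
      rw [hgt_Ioo]
      have hins : Finset.Ico (k-(r:ℤ)+1) (k+1) = insert k (Finset.Ioo (k-(r:ℤ)) k) := by
        ext x; simp only [Finset.mem_Ico, Finset.mem_Ioo, Finset.mem_insert]; omega
      rw [hins, Finset.sum_insert (by simp [Finset.mem_Ioo])]
      omega
    have h2 : hgtAt r s (k+1) + s (k+1-(r:ℤ)) = ∑ m ∈ Finset.Ico (k-(r:ℤ)+1) (k+1), s m := by
      rw [hgt_Ioo]
      have hins : Finset.Ico (k-(r:ℤ)+1) (k+1) = insert (k+1-(r:ℤ)) (Finset.Ioo (k+1-(r:ℤ)) (k+1)) := by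
        ext x; simp only [Finset.mem_Ico, Finset.mem_Ioo, Finset.mem_insert]; omega
      rw [hins, Finset.sum_insert (by simp [Finset.mem_Ioo])]
      omega
    omega
  have hterm : ∀ k : ℤ, A k - A (k+1)
      = q ^ (2 * hgtAt r s k) * (q ^ (2 * s (k-(r:ℤ))) - q ^ (2 * s k)) := by
    intro k
    simp only [hA]
    have e1 : 2 * (hgtAt r s k + s (k-(r:ℤ))) = 2 * hgtAt r s k + 2 * s (k-(r:ℤ)) := by ring
    have e2 : 2 * (hgtAt r s (k+1) + s (k+1-(r:ℤ))) = 2 * hgtAt r s k + 2 * s k := by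
      have := key k; omega
    rw [e1, e2, pow_add, pow_add, ← mul_sub]
  have htel : ∑ k ∈ W, (A k - A (k+1)) = A (-(N:ℤ)) - A ((N:ℤ)+(r:ℤ)) :=
    sum_telescope_Ico A (by omega)
  have hbound1 : A (-(N:ℤ)) = q ^ (2*r) := by
    have hh : hgtAt r s (-(N:ℤ)) = r - 1 := by
      rw [hgt_Ioo]
      rw [Finset.sum_congr rfl (fun m hm => hl m (by
        simp only [Finset.mem_Ioo] at hm; omega))]
      rw [Finset.sum_const, smul_eq_mul, mul_one, Int.card_Ioo]
      omega
    have hs1 : s (-(N:ℤ)-(r:ℤ)) = 1 := hl _ (by omega)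
    simp only [hA, hh, hs1]
    congr 1
    omega
  have hbound2 : A ((N:ℤ)+(r:ℤ)) = 1 := by
    have hh : hgtAt r s ((N:ℤ)+(r:ℤ)) = 0 := by
      rw [hgt_Ioo]
      exact Finset.sum_eq_zero (fun m hm => hrt m (by
        simp only [Finset.mem_Ioo] at hm; omega))
    have hs0 : s ((N:ℤ)+(r:ℤ)-(r:ℤ)) = 0 := hrt _ (by omega)
    simp only [hA, hh, hs0]
    norm_num
  have hsplit : ∑ k ∈ W, (A k - A (k+1)) =
      (∑ k ∈ W.filter (fun k => s (k-(r:ℤ)) = 1 ∧ s k = 0), q ^ (2 * hgtAt r s k)) * (q^2 - 1)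
      - (∑ k ∈ W.filter (fun k => s (k-(r:ℤ)) = 0 ∧ s k = 1), q ^ (2 * hgtAt r s k)) * (q^2 - 1) := by
    rw [← Finset.sum_filter_add_sum_filter_not W (fun k => s (k-(r:ℤ)) = 1 ∧ s k = 0)]
    have hP1 : ∑ k ∈ W.filter (fun k => s (k-(r:ℤ)) = 1 ∧ s k = 0), (A k - A (k+1)) =
        (∑ k ∈ W.filter (fun k => s (k-(r:ℤ)) = 1 ∧ s k = 0), q ^ (2 * hgtAt r s k)) * (q^2 - 1) := by
      rw [Finset.sum_mul]
      refine Finset.sum_congr rfl fun k hk => ?_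
      simp only [Finset.mem_filter] at hk
      rw [hterm k, hk.2.1, hk.2.2]
      ring
    have hsub : (W.filter (fun k => ¬(s (k-(r:ℤ)) = 1 ∧ s k = 0))) =
        (W.filter (fun k => (s (k-(r:ℤ)) = 0 ∧ s k = 1) ∨ (s (k-(r:ℤ)) = s k))) := by
      refine Finset.filter_congr fun k _ => ?_
      have := hb k; have := hb (k-(r:ℤ))
      constructor
      · intro h; omega
      · intro h; omega
    have hP2 : ∑ k ∈ W.filter (fun k => ¬(s (k-(r:ℤ)) = 1 ∧ s k = 0)), (A k - A (k+1)) =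
        -((∑ k ∈ W.filter (fun k => s (k-(r:ℤ)) = 0 ∧ s k = 1), q ^ (2 * hgtAt r s k)) * (q^2 - 1)) := by
      rw [hsub, ← Finset.sum_filter_add_sum_filter_not
        (W.filter (fun k => (s (k-(r:ℤ)) = 0 ∧ s k = 1) ∨ (s (k-(r:ℤ)) = s k))) (fun k => s (k-(r:ℤ)) = 0 ∧ s k = 1)]
      have hff1 : (W.filter (fun k => (s (k-(r:ℤ)) = 0 ∧ s k = 1) ∨ (s (k-(r:ℤ)) = s k))).filter
          (fun k => s (k-(r:ℤ)) = 0 ∧ s k = 1) = W.filter (fun k => s (k-(r:ℤ)) = 0 ∧ s k = 1) := by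
        rw [Finset.filter_filter]
        refine Finset.filter_congr fun k _ => ?_
        constructor
        · intro h; exact h.2
        · intro h; exact ⟨Or.inl h, h⟩
      have hzero : ∑ k ∈ (W.filter (fun k => (s (k-(r:ℤ)) = 0 ∧ s k = 1) ∨ (s (k-(r:ℤ)) = s k))).filter
          (fun k => ¬(s (k-(r:ℤ)) = 0 ∧ s k = 1)), (A k - A (k+1)) = 0 := by
        refine Finset.sum_eq_zero fun k hk => ?_
        simp only [Finset.mem_filter] at hk
        have heq : s (k-(r:ℤ)) = s k := by
          rcases hk.1.2 with h | h
          · exact absurd h hk.2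
          · exact h
        rw [hterm k, heq, sub_self, mul_zero]
      rw [hff1, hzero, add_zero, Finset.sum_mul]
      rw [← Finset.sum_neg_distrib]
      refine Finset.sum_congr rfl fun k hk => ?_
      simp only [Finset.mem_filter] at hk
      rw [hterm k, hk.2.1, hk.2.2]
      ring
    rw [hP1, hP2]
    ring
  have hgeom : (∑ i ∈ Finset.range r, q ^ (2*i)) * (q^2 - 1) = q^(2*r) - 1 := by
    have hg := geom_sum_mul (q^2) r
    have hre : ∀ i : ℕ, q ^ (2*i) = (q^2)^i := fun i => pow_mul q 2 i
    rw [Finset.sum_congr rfl (fun i _ => hre i), hg, ← hre]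
  have hc0 : (q^2 - 1 : Polynomial ℤ) ≠ 0 := by
    intro h
    have h2 := congrArg (Polynomial.eval 0) h
    simp [hq] at h2
  apply mul_right_cancel₀ hc0
  rw [add_mul, hgeom]
  have E1 : (∑ k ∈ W.filter (fun k => s (k-(r:ℤ)) = 1 ∧ s k = 0), q ^ (2 * hgtAt r s k)) * (q^2 - 1)
      - (∑ k ∈ W.filter (fun k => s (k-(r:ℤ)) = 0 ∧ s k = 1), q ^ (2 * hgtAt r s k)) * (q^2 - 1)
      = q^(2*r) - 1 := by
    rw [← hsplit, htel, hbound1, hbound2]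
  linear_combination E1




lemma good_part (lam : PartT) : ∃ N, Good (edgeSeq lam.1) N := good_edgeSeq lam.2

noncomputable def bnd (lam : PartT) : ℕ := Classical.choose (good_part lam)

lemma bnd_spec (lam : PartT) : Good (edgeSeq lam.1) (bnd lam) :=
  Classical.choose_spec (good_part lam)

lemma partT_ext {lam mu : PartT} (h : edgeSeq lam.1 = edgeSeq mu.1) : lam = mu :=
  Subtype.ext (edgeSeq_inj lam.2 mu.2 h)

lemma exists_flip_partition (lam : PartT) {a b : ℤ} (ha : edgeSeq lam.1 a = 1)
    (hb : edgeSeq lam.1 b = 0) : ∃ mu : PartT, edgeSeq mu.1 = flipFn (edgeSeq lam.1) a b := by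
  have hab : a ≠ b := by intro h; rw [h] at ha; omega
  obtain ⟨M, hM⟩ := good_flip (bnd_spec lam) ha hb hab
  obtain ⟨f, hf, hef⟩ := exists_partition_of_good hM
  exact ⟨⟨f, hf⟩, hef⟩

noncomputable def up (r : ℕ) (lam : PartT) (k : ℤ) : PartT :=
  if h : edgeSeq lam.1 (k - r) = 1 ∧ edgeSeq lam.1 k = 0 then
    Classical.choose (exists_flip_partition lam h.1 h.2) else lam

lemma up_spec {r : ℕ} {lam : PartT} {k : ℤ} (h1 : edgeSeq lam.1 (k - r) = 1)
    (h0 : edgeSeq lam.1 k = 0) :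
    edgeSeq (up r lam k).1 = flipFn (edgeSeq lam.1) (k - r) k := by
  unfold up
  rw [dif_pos ⟨h1, h0⟩]
  exact Classical.choose_spec (exists_flip_partition lam h1 h0)

noncomputable def down (r : ℕ) (lam : PartT) (k : ℤ) : PartT :=
  if h : edgeSeq lam.1 (k - r) = 0 ∧ edgeSeq lam.1 k = 1 then
    Classical.choose (exists_flip_partition lam h.2 h.1) else lam

lemma down_spec {r : ℕ} {lam : PartT} {k : ℤ} (h0 : edgeSeq lam.1 (k - r) = 0)
    (h1 : edgeSeq lam.1 k = 1) :
    edgeSeq (down r lam k).1 = flipFn (edgeSeq lam.1) k (k - r) := by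
  unfold down
  rw [dif_pos ⟨h0, h1⟩]
  exact Classical.choose_spec (exists_flip_partition lam h1 h0)

noncomputable def AddS (r : ℕ) (lam : PartT) : Finset ℤ :=
  (Finset.Ico (-(bnd lam : ℤ)) ((bnd lam : ℤ) + (r : ℤ))).filter
    (fun k => edgeSeq lam.1 (k - r) = 1 ∧ edgeSeq lam.1 k = 0)

noncomputable def RemS (r : ℕ) (lam : PartT) : Finset ℤ :=
  (Finset.Ico (-(bnd lam : ℤ)) ((bnd lam : ℤ) + (r : ℤ))).filter
    (fun k => edgeSeq lam.1 (k - r) = 0 ∧ edgeSeq lam.1 k = 1)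

lemma mem_AddS {r : ℕ} (hr : 1 ≤ r) {lam : PartT} {k : ℤ} :
    k ∈ AddS r lam ↔ edgeSeq lam.1 (k - r) = 1 ∧ edgeSeq lam.1 k = 0 := by
  obtain ⟨hb, hl, hrt, -⟩ := bnd_spec lam
  simp only [AddS, Finset.mem_filter, Finset.mem_Ico]
  constructor
  · tauto
  · intro h
    refine ⟨⟨?_, ?_⟩, h⟩
    · by_contra hc
      push_neg at hc
      have := hl k (by omega)
      omega
    · by_contra hc
      push_neg at hc
      have := hrt (k - r) (by omega)
      omega

lemma mem_RemS {r : ℕ} (hr : 1 ≤ r) {lam : PartT} {k : ℤ} :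
    k ∈ RemS r lam ↔ edgeSeq lam.1 (k - r) = 0 ∧ edgeSeq lam.1 k = 1 := by
  obtain ⟨hb, hl, hrt, -⟩ := bnd_spec lam
  have hrZ : (1:ℤ) ≤ (r:ℤ) := by exact_mod_cast hr
  simp only [RemS, Finset.mem_filter, Finset.mem_Ico]
  constructor
  · tauto
  · intro h
    refine ⟨⟨?_, ?_⟩, h⟩
    · by_contra hc
      push_neg at hc
      have := hl (k - r) (by omega)
      omega
    · by_contra hc
      push_neg at hc
      have := hrt k (by omega)
      omega

lemma edgeFlip_up {r : ℕ} (hr : 1 ≤ r) {s : ℤ → ℕ} {p : ℤ} (h1 : s (p - r) = 1)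
    (h0 : s p = 0) : EdgeFlip r s (flipFn s (p - r) p) p := by
  have hrZ : (1:ℤ) ≤ (r:ℤ) := by exact_mod_cast hr
  exact ⟨h1, h0, flipFn_a s _ _, flipFn_b s (by omega),
    fun j hj1 hj2 => (flipFn_other s hj1 hj2).symm⟩

lemma edgeFlip_down {r : ℕ} (hr : 1 ≤ r) {s : ℤ → ℕ} {p : ℤ} (h0 : s (p - r) = 0)
    (h1 : s p = 1) : EdgeFlip r (flipFn s p (p - r)) s p := by
  have hrZ : (1:ℤ) ≤ (r:ℤ) := by exact_mod_cast hr
  exact ⟨flipFn_b s (by omega), flipFn_a s _ _, h0, h1,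
    fun j hj1 hj2 => flipFn_other s hj2 hj1⟩

lemma hgt_flip_down_eq {r : ℕ} (hr : 1 ≤ r) (s : ℤ → ℕ) (p : ℤ) :
    hgtAt r (flipFn s p (p - r)) p = hgtAt r s p := by
  rw [hgt_Ioo, hgt_Ioo]
  refine Finset.sum_congr rfl fun m hm => ?_
  simp only [Finset.mem_Ioo] at hm
  exact flipFn_other s (by omega) (by omega)

lemma apply_eq_sum (L : FreeMod →ₗ[Polynomial ℤ] FreeMod) (x : FreeMod) (mu : PartT) :
    (L x) mu = ∑ nu ∈ x.support, x nu * (L (Finsupp.single nu 1)) mu := by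
  conv_lhs => rw [← Finsupp.sum_single x]
  rw [Finsupp.sum, map_sum, Finsupp.finset_sum_apply]
  refine Finset.sum_congr rfl fun nu _ => ?_
  have h1 : Finsupp.single nu (x nu) = x nu • Finsupp.single nu 1 := by
    rw [Finsupp.smul_single', mul_one]
  rw [h1, map_smul, Finsupp.smul_apply, smul_eq_mul]

lemma U_sum {r : ℕ} (hr : 1 ≤ r) (U : FreeMod →ₗ[Polynomial ℤ] FreeMod)
    (hU : ∀ (lam mu : PartT) (k : ℤ), EdgeFlip r (edgeSeq lam.1) (edgeSeq mu.1) k →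
      (U (Finsupp.single lam 1)) mu = Polynomial.X ^ hgtAt r (edgeSeq lam.1) k)
    (hU0 : ∀ lam mu : PartT, ¬ CovRib r lam mu → (U (Finsupp.single lam 1)) mu = 0)
    (lam : PartT) (F : PartT → Polynomial ℤ) :
    (∑ nu ∈ (U (Finsupp.single lam 1)).support, (U (Finsupp.single lam 1)) nu * F nu)
    = ∑ k ∈ AddS r lam, Polynomial.X ^ (hgtAt r (edgeSeq lam.1) k) * F (up r lam k) := by
  have hrZ : (1:ℤ) ≤ (r:ℤ) := by exact_mod_cast hr
  have hflip : ∀ k ∈ AddS r lam, EdgeFlip r (edgeSeq lam.1) (edgeSeq (up r lam k).1) k := by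
    intro k hk
    obtain ⟨h1, h0⟩ := (mem_AddS hr).1 hk
    rw [up_spec h1 h0]
    exact edgeFlip_up hr h1 h0
  have hsupp : (U (Finsupp.single lam 1)).support = (AddS r lam).image (up r lam) := by
    ext nu
    simp only [Finsupp.mem_support_iff, Finset.mem_image]
    constructor
    · intro hnu
      by_cases hcov : CovRib r lam nu
      · obtain ⟨k, hk⟩ := hcov
        obtain ⟨h1, h0, e0, e1, hagree⟩ := hk
        refine ⟨k, (mem_AddS hr).2 ⟨h1, h0⟩, ?_⟩
        refine (partT_ext ?_).symm
        rw [up_spec h1 h0]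
        funext j
        by_cases hj1 : j = k - r
        · rw [hj1, e0, flipFn_a]
        · by_cases hj2 : j = k
          · rw [hj2, e1, flipFn_b _ (by omega)]
          · rw [flipFn_other _ hj1 hj2, ← hagree j hj1 hj2]
      · exact absurd (hU0 lam nu hcov) hnu
    · rintro ⟨k, hkA, rfl⟩
      rw [hU lam _ k (hflip k hkA)]
      exact pow_ne_zero _ Polynomial.X_ne_zero
  have hinj : ∀ x ∈ AddS r lam, ∀ y ∈ AddS r lam, up r lam x = up r lam y → x = y := by
    intro x hx y hy hxy
    obtain ⟨h1x, h0x⟩ := (mem_AddS hr).1 hx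
    obtain ⟨h1y, h0y⟩ := (mem_AddS hr).1 hy
    have hseq : flipFn (edgeSeq lam.1) (x - r) x = flipFn (edgeSeq lam.1) (y - r) y := by
      rw [← up_spec h1x h0x, ← up_spec h1y h0y, hxy]
    have hv := congrFun hseq x
    rw [flipFn_b _ (by omega)] at hv
    by_cases hxy2 : x = y
    · exact hxy2
    exfalso
    by_cases h2 : x = y - (r:ℤ)
    · rw [h2, flipFn_a] at hv
      omega
    · rw [flipFn_other _ h2 hxy2] at hv
      omega
  rw [hsupp, Finset.sum_image hinj]
  refine Finset.sum_congr rfl fun k hk => ?_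
  rw [hU lam _ k (hflip k hk)]

lemma D_sum {r : ℕ} (hr : 1 ≤ r) (D : FreeMod →ₗ[Polynomial ℤ] FreeMod)
    (hD : ∀ (lam mu : PartT) (k : ℤ), EdgeFlip r (edgeSeq mu.1) (edgeSeq lam.1) k →
      (D (Finsupp.single lam 1)) mu = Polynomial.X ^ hgtAt r (edgeSeq mu.1) k)
    (hD0 : ∀ lam mu : PartT, ¬ CovRib r mu lam → (D (Finsupp.single lam 1)) mu = 0)
    (lam : PartT) (F : PartT → Polynomial ℤ) :
    (∑ rho ∈ (D (Finsupp.single lam 1)).support, (D (Finsupp.single lam 1)) rho * F rho)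
    = ∑ k ∈ RemS r lam, Polynomial.X ^ (hgtAt r (edgeSeq lam.1) k) * F (down r lam k) := by
  have hrZ : (1:ℤ) ≤ (r:ℤ) := by exact_mod_cast hr
  have hflip : ∀ k ∈ RemS r lam,
      EdgeFlip r (edgeSeq (down r lam k).1) (edgeSeq lam.1) k := by
    intro k hk
    obtain ⟨h0, h1⟩ := (mem_RemS hr).1 hk
    rw [down_spec h0 h1]
    exact edgeFlip_down hr h0 h1
  have hsupp : (D (Finsupp.single lam 1)).support = (RemS r lam).image (down r lam) := by
    ext rho
    simp only [Finsupp.mem_support_iff, Finset.mem_image]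
    constructor
    · intro hrho
      by_cases hcov : CovRib r rho lam
      · obtain ⟨k, hk⟩ := hcov
        obtain ⟨e1, e2, h0, h1, hagree⟩ := hk
        refine ⟨k, (mem_RemS hr).2 ⟨h0, h1⟩, ?_⟩
        refine (partT_ext ?_).symm
        rw [down_spec h0 h1]
        funext j
        by_cases hj1 : j = k
        · rw [hj1, e2, flipFn_a]
        · by_cases hj2 : j = k - r
          · rw [hj2, e1, flipFn_b _ (by omega)]
          · rw [flipFn_other _ hj1 hj2, hagree j hj2 hj1]
      · exact absurd (hD0 lam rho hcov) hrho
    · rintro ⟨k, hkR, rfl⟩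
      rw [hD lam _ k (hflip k hkR)]
      exact pow_ne_zero _ Polynomial.X_ne_zero
  have hinj : ∀ x ∈ RemS r lam, ∀ y ∈ RemS r lam, down r lam x = down r lam y → x = y := by
    intro x hx y hy hxy
    obtain ⟨h0x, h1x⟩ := (mem_RemS hr).1 hx
    obtain ⟨h0y, h1y⟩ := (mem_RemS hr).1 hy
    have hseq : flipFn (edgeSeq lam.1) x (x - r) = flipFn (edgeSeq lam.1) y (y - r) := by
      rw [← down_spec h0x h1x, ← down_spec h0y h1y, hxy]
    have hv := congrFun hseq x
    rw [flipFn_a] at hv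
    by_cases hxy2 : x = y
    · exact hxy2
    exfalso
    by_cases h2 : x = y - (r:ℤ)
    · rw [h2, flipFn_b _ (by omega)] at hv
      omega
    · rw [flipFn_other _ hxy2 h2] at hv
      omega
  rw [hsupp, Finset.sum_image hinj]
  refine Finset.sum_congr rfl fun k hk => ?_
  obtain ⟨h0, h1⟩ := (mem_RemS hr).1 hk
  rw [hD lam _ k (hflip k hk), down_spec h0 h1, hgt_flip_down_eq hr]


end Stmt8Aux

/-- The commutation relation `D ∘ U = U ∘ D + (1 + q² + ⋯ + q^{2(r-1)})·Id` for the
height-weighted up and down operators on the `r`-rim hook poset. -/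
theorem stmt8 (r : ℕ) (hr : 1 ≤ r)
    (U D : FreeMod →ₗ[Polynomial ℤ] FreeMod)
    (hU : ∀ (lam mu : PartT) (k : ℤ), EdgeFlip r (edgeSeq lam.1) (edgeSeq mu.1) k →
      (U (Finsupp.single lam 1)) mu = Polynomial.X ^ hgtAt r (edgeSeq lam.1) k)
    (hU0 : ∀ lam mu : PartT, ¬ CovRib r lam mu → (U (Finsupp.single lam 1)) mu = 0)
    (hD : ∀ (lam mu : PartT) (k : ℤ), EdgeFlip r (edgeSeq mu.1) (edgeSeq lam.1) k →
      (D (Finsupp.single lam 1)) mu = Polynomial.X ^ hgtAt r (edgeSeq mu.1) k)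
    (hD0 : ∀ lam mu : PartT, ¬ CovRib r mu lam → (D (Finsupp.single lam 1)) mu = 0) :
    D ∘ₗ U = U ∘ₗ D +
      (∑ i ∈ Finset.range r, (Polynomial.X : Polynomial ℤ) ^ (2 * i)) •
        (LinearMap.id : FreeMod →ₗ[Polynomial ℤ] FreeMod) := by
  classical
  have hrZ : (1:ℤ) ≤ (r:ℤ) := by exact_mod_cast hr
  refine Finsupp.lhom_ext fun lam c => ?_
  have hsm : (Finsupp.single lam c : FreeMod) = c • Finsupp.single lam 1 := by
    rw [Finsupp.smul_single', mul_one]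
  rw [hsm, map_smul, map_smul]
  congr 1
  simp only [LinearMap.comp_apply, LinearMap.add_apply, LinearMap.smul_apply,
    LinearMap.id_apply]
  refine Finsupp.ext fun mu => ?_
  rw [Finsupp.add_apply, Finsupp.smul_apply, smul_eq_mul]
  rw [Stmt8Aux.apply_eq_sum D (U (Finsupp.single lam 1)) mu,
    Stmt8Aux.apply_eq_sum U (D (Finsupp.single lam 1)) mu,
    Stmt8Aux.U_sum hr U hU hU0 lam (fun nu => (D (Finsupp.single nu 1)) mu),
    Stmt8Aux.D_sum hr D hD hD0 lam (fun rho => (U (Finsupp.single rho 1)) mu)]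
  by_cases hlm : lam = mu
  · subst hlm
    rw [Finsupp.single_eq_same, mul_one]
    have hL : ∀ k ∈ Stmt8Aux.AddS r lam,
        Polynomial.X ^ hgtAt r (edgeSeq lam.1) k *
          (D (Finsupp.single (Stmt8Aux.up r lam k) 1)) lam
        = (Polynomial.X : Polynomial ℤ) ^ (2 * hgtAt r (edgeSeq lam.1) k) := by
      intro k hk
      obtain ⟨h1, h0⟩ := (Stmt8Aux.mem_AddS hr).1 hk
      have hfl : EdgeFlip r (edgeSeq lam.1) (edgeSeq (Stmt8Aux.up r lam k).1) k := by
        rw [Stmt8Aux.up_spec h1 h0]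
        exact Stmt8Aux.edgeFlip_up hr h1 h0
      rw [hD (Stmt8Aux.up r lam k) lam k hfl, ← pow_add]
      congr 1
      omega
    have hR : ∀ k ∈ Stmt8Aux.RemS r lam,
        Polynomial.X ^ hgtAt r (edgeSeq lam.1) k *
          (U (Finsupp.single (Stmt8Aux.down r lam k) 1)) lam
        = (Polynomial.X : Polynomial ℤ) ^ (2 * hgtAt r (edgeSeq lam.1) k) := by
      intro k hk
      obtain ⟨h0, h1⟩ := (Stmt8Aux.mem_RemS hr).1 hk
      have hfl : EdgeFlip r (edgeSeq (Stmt8Aux.down r lam k).1) (edgeSeq lam.1) k := by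
        rw [Stmt8Aux.down_spec h0 h1]
        exact Stmt8Aux.edgeFlip_down hr h0 h1
      rw [hU (Stmt8Aux.down r lam k) lam k hfl, Stmt8Aux.down_spec h0 h1,
        Stmt8Aux.hgt_flip_down_eq hr, ← pow_add]
      congr 1
      omega
    rw [Finset.sum_congr rfl hL, Finset.sum_congr rfl hR]
    exact Stmt8Aux.tel hr (Stmt8Aux.bnd_spec lam)
  · rw [Finsupp.single_eq_of_ne' hlm, mul_zero, add_zero]
    have hst : edgeSeq lam.1 ≠ edgeSeq mu.1 := fun h => hlm (Stmt8Aux.partT_ext h)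
    by_cases hex : ∃ k k' : ℤ, k ∈ Stmt8Aux.AddS r lam ∧
        EdgeFlip r (edgeSeq mu.1) (Stmt8Aux.flipFn (edgeSeq lam.1) (k - r) k) k'
    · obtain ⟨k, k', hkA, hk'⟩ := hex
      obtain ⟨h1, h0⟩ := (Stmt8Aux.mem_AddS hr).1 hkA
      have d : Stmt8Aux.Desc r (edgeSeq lam.1) (edgeSeq mu.1) k k' :=
        Stmt8Aux.desc_of_up hr hst h1 h0 hk'
      have hk'R : k' ∈ Stmt8Aux.RemS r lam :=
        (Stmt8Aux.mem_RemS hr).2 ⟨d.2.2.1, d.2.2.2.1⟩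
      rw [Finset.sum_eq_single_of_mem k hkA ?side1,
        Finset.sum_eq_single_of_mem k' hk'R ?side2]
      case side1 =>
        intro k₂ hk₂ hne
        obtain ⟨h1₂, h0₂⟩ := (Stmt8Aux.mem_AddS hr).1 hk₂
        rw [hD0 (Stmt8Aux.up r lam k₂) mu ?_, mul_zero]
        rintro ⟨k₂', hcov⟩
        rw [Stmt8Aux.up_spec h1₂ h0₂] at hcov
        have d₂ := Stmt8Aux.desc_of_up hr hst h1₂ h0₂ hcov
        exact hne (Stmt8Aux.desc_unique hr d₂ d).1
      case side2 =>
        intro k₂ hk₂ hne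
        obtain ⟨h0₂, h1₂⟩ := (Stmt8Aux.mem_RemS hr).1 hk₂
        rw [hU0 (Stmt8Aux.down r lam k₂) mu ?_, mul_zero]
        rintro ⟨k₂'', hcov⟩
        rw [Stmt8Aux.down_spec h0₂ h1₂] at hcov
        have d₂ := Stmt8Aux.desc_of_down hr hst h0₂ h1₂ hcov
        exact hne (Stmt8Aux.desc_unique hr d₂ d).2
      · have hfl1 : EdgeFlip r (edgeSeq mu.1) (edgeSeq (Stmt8Aux.up r lam k).1) k' := by
          rw [Stmt8Aux.up_spec h1 h0]
          exact hk'
        have hfl2 : EdgeFlip r (edgeSeq (Stmt8Aux.down r lam k').1) (edgeSeq mu.1) k := by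
          rw [Stmt8Aux.down_spec d.2.2.1 d.2.2.2.1]
          exact Stmt8Aux.desc_flipD hr d
        rw [hD (Stmt8Aux.up r lam k) mu k' hfl1, hU (Stmt8Aux.down r lam k') mu k hfl2,
          Stmt8Aux.down_spec d.2.2.1 d.2.2.2.1, ← pow_add, ← pow_add]
        exact congrArg (Polynomial.X ^ ·) (Stmt8Aux.desc_exp hr d)
    · rw [Finset.sum_eq_zero, Finset.sum_eq_zero]
      · intro k hk
        obtain ⟨h0₂, h1₂⟩ := (Stmt8Aux.mem_RemS hr).1 hk
        rw [hU0 (Stmt8Aux.down r lam k) mu ?_, mul_zero]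
        rintro ⟨k₂'', hcov⟩
        rw [Stmt8Aux.down_spec h0₂ h1₂] at hcov
        have d₂ := Stmt8Aux.desc_of_down hr hst h0₂ h1₂ hcov
        exact hex ⟨k₂'', k, (Stmt8Aux.mem_AddS hr).2 ⟨d₂.1, d₂.2.1⟩,
          Stmt8Aux.desc_flipU hr d₂⟩
      · intro k hk
        obtain ⟨h1₂, h0₂⟩ := (Stmt8Aux.mem_AddS hr).1 hk
        rw [hD0 (Stmt8Aux.up r lam k) mu ?_, mul_zero]
        rintro ⟨k', hcov⟩
        rw [Stmt8Aux.up_spec h1₂ h0₂] at hcov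
        exact hex ⟨k, k', hk, hcov⟩
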